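/- Let n, m be integers with m > 1, and suppose a_1, …, a_{n−m+2} are integers satisfying: (i) Σ_m(a_1,…,a_{n−m+2}) = 0, and (ii) σ_u(a_1,…,a_{n−m+2}) ≥ 0 for every 1 ≤ u ≤ n−m+2. Then a_1 = ⋯ = a_{n−m+2} = 0. -/

import Mathlib

open MvPolynomial

/-- Arithmetic core of the constancy of morphisms `ℙ^m → A_n/P(1,2,…,n−m+2)`:
if integers `a_1,…,a_{n−m+2}` satisfy `Σ_m(a) = 0` and `σ_u(a) ≥ 0` for all
`1 ≤ u ≤ n−m+2`, then all `a_i = 0`. -/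
theorem eq_zero_of_hsymm_eq_zero_of_esymm_nonneg (n m : ℕ) (hm : 1 < m) (hmn : m ≤ n)
    (a : Fin (n - m + 2) → ℤ)
    (h0 : eval a (hsymm (Fin (n - m + 2)) ℤ m) = 0)
    (he : ∀ u, 1 ≤ u → u ≤ n - m + 2 → 0 ≤ eval a (esymm (Fin (n - m + 2)) ℤ u)) :
    ∀ i, a i = 0 := by
  have hesymm : ∀ u, eval a (esymm (Fin (n - m + 2)) ℤ u)
      = ∑ t ∈ Finset.powersetCard u Finset.univ, ∏ i ∈ t, a i := by
    intro u
    simp [esymm, eval_sum, eval_prod]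
  -- Step 1: all `a i` are nonnegative
  have hnonneg : ∀ j, 0 ≤ a j := by
    intro j
    by_contra hj
    push_neg at hj
    set s : ℤ := -a j with hs
    have hs0 : 0 < s := by omega
    have hzero : ∏ i : Fin (n - m + 2), (a i + s) = 0 :=
      Finset.prod_eq_zero (Finset.mem_univ j) (by simp [hs])
    rw [Finset.prod_add, Finset.powerset_card_disjiUnion] at hzero
    erw [Finset.sum_disjiUnion] at hzero
    have hcard : (Finset.univ : Finset (Fin (n - m + 2))).card = n - m + 2 := by simp
    have hpos : 0 < ∑ u ∈ Finset.range ((Finset.univ : Finset (Fin (n - m + 2))).card + 1),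
        ∑ t ∈ Finset.powersetCard u Finset.univ,
          (∏ i ∈ t, a i) * ∏ i ∈ Finset.univ \ t, s := by
      have hinner : ∀ u, ∑ t ∈ Finset.powersetCard u (Finset.univ : Finset (Fin (n - m + 2))),
          (∏ i ∈ t, a i) * ∏ i ∈ Finset.univ \ t, s
          = (eval a (esymm (Fin (n - m + 2)) ℤ u)) * s ^ (n - m + 2 - u) := by
        intro u
        rw [hesymm, Finset.sum_mul]
        apply Finset.sum_congr rfl
        intro t ht
        have htc : t.card = u := Finset.mem_powersetCard_univ.mp ht
        rw [Finset.prod_const, Finset.card_sdiff_of_subset (Finset.subset_univ t), hcard, htc]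
      apply Finset.sum_pos' ?_ ?_
      · intro u hu
        rw [hinner]
        rcases Nat.eq_zero_or_pos u with h | h
        · subst h
          simp only [esymm_zero, map_one, one_mul]
          positivity
        · apply mul_nonneg (he u h ?_) (pow_nonneg hs0.le _)
          rw [hcard] at hu
          exact Nat.lt_succ_iff.mp (Finset.mem_range.mp hu)
      · refine ⟨0, by simp, ?_⟩
        rw [hinner]
        simp only [esymm_zero, map_one, one_mul]
        positivity
    omega
  -- Step 2: `hsymm m` evaluates to a sum of nonnegative terms including `a i ^ m`
  intro i
  have hh : eval a (hsymm (Fin (n - m + 2)) ℤ m) = ∑ μ : Sym (Fin (n - m + 2)) m, (μ.1.map a).prod := by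
    simp [hsymm, eval_sum, ← Multiset.prod_hom']
  have hterm : ((Sym.replicate m i : Sym (Fin (n - m + 2)) m).1.map a).prod = a i ^ m := by
    simp [Sym.replicate, Multiset.map_replicate, Multiset.prod_replicate]
  have hle : a i ^ m ≤ eval a (hsymm (Fin (n - m + 2)) ℤ m) := by
    rw [hh, ← hterm]
    apply Finset.single_le_sum (f := fun μ : Sym (Fin (n - m + 2)) m => (μ.1.map a).prod)
      ?_ (Finset.mem_univ _)
    intro μ _
    apply Multiset.prod_nonneg
    intro x hx
    obtain ⟨y, -, rfl⟩ := Multiset.mem_map.mp hx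
    exact hnonneg y
  have h2 : a i ^ m = 0 := le_antisymm (h0 ▸ hle) (pow_nonneg (hnonneg i) m)
  exact pow_eq_zero_iff (by omega) |>.mp h2
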